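/- For a symmetric matrix M and its projection P_S(M) = U max(Λ,0) Uᵀ, P_S(M) is a nearest positive semidefinite matrix to M in Frobenius norm: ‖M - P_S(M)‖_F ≤ ‖M - A‖_F for all symmetric positive semidefinite A. -/

import Mathlib

open Matrix

/-- Frobenius norm of a real matrix. -/
noncomputable def frobNorm {d : ℕ} (A : Matrix (Fin d) (Fin d) ℝ) : ℝ :=
  Real.sqrt (∑ i, ∑ j, (A i j) ^ 2)

lemma frobNorm_conj {d : ℕ} (U X : Matrix (Fin d) (Fin d) ℝ) (hU : Uᵀ * U = 1) :
    frobNorm (U * X * Uᵀ) = frobNorm X := by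
  have key : ∀ Y : Matrix (Fin d) (Fin d) ℝ, ∑ i, ∑ j, (Y i j) ^ 2 = (Yᵀ * Y).trace := by
    intro Y
    simp [Matrix.trace, Matrix.mul_apply, Matrix.diag, pow_two]
    rw [Finset.sum_comm]
  unfold frobNorm
  rw [key, key]
  congr 1
  have : (U * X * Uᵀ)ᵀ * (U * X * Uᵀ) = U * (Xᵀ * X) * Uᵀ := by
    simp only [Matrix.transpose_mul, Matrix.transpose_transpose, Matrix.mul_assoc]
    rw [← Matrix.mul_assoc Uᵀ U, hU, Matrix.one_mul]
  rw [this, Matrix.trace_mul_cycle, ← Matrix.mul_assoc, hU, Matrix.one_mul]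

theorem eigenvalue_truncation_nearest_psd
    {d : ℕ} (M U : Matrix (Fin d) (Fin d) ℝ) (lam : Fin d → ℝ)
    (hsymm : Mᵀ = M) (hU : Uᵀ * U = 1)
    (hdecomp : M = U * diagonal lam * Uᵀ) :
    ∀ A : Matrix (Fin d) (Fin d) ℝ, A.PosSemidef →
      frobNorm (M - U * diagonal (fun i => max (lam i) 0) * Uᵀ) ≤
        frobNorm (M - A) := by
  intro A hA
  have hUU : U * Uᵀ = 1 := mul_eq_one_comm.mp hU
  set B : Matrix (Fin d) (Fin d) ℝ := Uᵀ * A * U with hBdef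
  have hBpsd : B.PosSemidef := by
    simpa using hA.conjTranspose_mul_mul_same U
  have hBdiag : ∀ i, 0 ≤ B i i := by
    intro i
    have := hBpsd.dotProduct_mulVec_nonneg (Pi.single i 1)
    simpa [Matrix.mulVec, dotProduct, Pi.single_apply] using this
  have hAeq : A = U * B * Uᵀ := by
    rw [hBdef]
    simp only [Matrix.mul_assoc]
    rw [hUU, Matrix.mul_one, ← Matrix.mul_assoc, hUU, Matrix.one_mul]
  have e1 : M - U * diagonal (fun i => max (lam i) 0) * Uᵀ
      = U * (diagonal (fun i => lam i - max (lam i) 0)) * Uᵀ := by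
    have hd : diagonal (fun i => lam i - max (lam i) 0)
        = diagonal lam - diagonal (fun i => max (lam i) 0) := by
      ext i j
      by_cases h : i = j <;> simp [Matrix.diagonal_apply, h]
    rw [hdecomp, hd, Matrix.mul_sub, Matrix.sub_mul]
  have e2 : M - A = U * (diagonal lam - B) * Uᵀ := by
    rw [hdecomp, hAeq, Matrix.mul_sub, Matrix.sub_mul]
  rw [e1, e2, frobNorm_conj U _ hU, frobNorm_conj U _ hU]
  unfold frobNorm
  apply Real.sqrt_le_sqrt
  calc ∑ i, ∑ j, (diagonal (fun i => lam i - max (lam i) 0) i j) ^ 2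
      = ∑ i, (lam i - max (lam i) 0) ^ 2 := by
        apply Finset.sum_congr rfl
        intro i _
        rw [Finset.sum_eq_single i]
        · simp
        · intro j _ hj
          simp [Matrix.diagonal_apply_ne' _ hj]
        · simp
    _ ≤ ∑ i, ∑ j, ((diagonal lam - B) i j) ^ 2 := by
        apply Finset.sum_le_sum
        intro i _
        calc (lam i - max (lam i) 0) ^ 2
            ≤ ((diagonal lam - B) i i) ^ 2 := by
              simp only [Matrix.sub_apply, Matrix.diagonal_apply_eq]
              rcases le_total (lam i) 0 with h | h
              · rw [max_eq_right h]
                nlinarith [hBdiag i]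
              · rw [max_eq_left h]
                nlinarith [hBdiag i]
          _ ≤ ∑ j, ((diagonal lam - B) i j) ^ 2 :=
              Finset.single_le_sum (f := fun j => ((diagonal lam - B) i j) ^ 2)
                (fun j _ => sq_nonneg _) (Finset.mem_univ i)
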